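/- arXiv:2006.05660 — 2 statements merged into one kernel-verified Lean document; each statement's English description precedes it below -/
import Mathlib

section
/- Let {0} = Λ₀ ⊂ Λ₁ ⊂ ⋯ ⊂ Λ_k = Λ be a filtration of a lattice Λ by pure sublattices, and for 1 ≤ i ≤ k let Q_i = Λ_i/Λ_{i−1} denote the quotient lattice, i.e. the image of Λ_i under the orthogonal projection onto the orthogonal complement of span(Λ_{i−1}). Then μ(Λ)² ≤ Σ_{i=1}^k μ(Q_i)². -/
open scoped RealInnerProductSpace
open Metric

noncomputable section

variable {E : Type*} [NormedAddCommGroup E] [InnerProductSpace ℝ E] [FiniteDimensional ℝ E]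

/-- `L ⊆ E` is a lattice of rank `n`: it is generated (over `ℤ`) by `n`
`ℝ`-linearly independent vectors. -/
def IsLatticeOfRank (L : Submodule ℤ E) (n : ℕ) : Prop :=
  ∃ b : Fin n → E, LinearIndependent ℝ b ∧ L = Submodule.span ℤ (Set.range b)

/-- The real span of a lattice. -/
def latSpan (L : Submodule ℤ E) : Submodule ℝ E := Submodule.span ℝ (L : Set E)

/-- The covering radius of a lattice, computed inside its real span. -/
def covRad (L : Submodule ℤ E) : ℝ :=
  ⨆ x : latSpan L, infDist (x : E) (L : Set E)

/-- `L'` is a pure sublattice of `L`: the quotient is torsion-free. -/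
def IsPureIn (L' L : Submodule ℤ E) : Prop :=
  L' ≤ L ∧ ∀ v ∈ L, ∀ m : ℤ, m ≠ 0 → m • v ∈ L' → v ∈ L'

/-- Orthogonal projection of `E` onto the orthogonal complement of the span
of `L'`, as a `ℤ`-linear endomorphism of `E`. -/
def projPerp (L' : Submodule ℤ E) : E →ₗ[ℤ] E :=
  ((latSpan L')ᗮ.subtype.comp (Submodule.orthogonalProjection (latSpan L')ᗮ).toLinearMap).restrictScalars ℤ

/-- The quotient lattice `L/L'`, realized as the image of `L` under the
orthogonal projection onto the orthogonal complement of the span of `L'`. -/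
def quotLat (L L' : Submodule ℤ E) : Submodule ℤ E := L.map (projPerp L')

lemma covRad_nonneg (L : Submodule ℤ E) : 0 ≤ covRad L :=
  Real.iSup_nonneg fun _ => infDist_nonneg

lemma fg_of_le_fg {L' L : Submodule ℤ E} (h : L' ≤ L) (hL : L.FG) : L'.FG := by
  have h1 : IsNoetherian ℤ L := isNoetherian_of_fg_of_noetherian L hL
  have h2 : (L'.comap L.subtype).FG := IsNoetherian.noetherian _
  have h3 := h2.map L.subtype
  rwa [Submodule.map_comap_subtype, inf_eq_right.mpr h] at h3

lemma exists_covRad_bound (Q : Submodule ℤ E) (hQ : Q.FG) :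
    ∃ C : ℝ, ∀ y ∈ latSpan Q, infDist y (Q : Set E) ≤ C := by
  obtain ⟨s, hs⟩ := hQ
  refine ⟨∑ v ∈ s, ‖v‖, fun y hy => ?_⟩
  have hy' : y ∈ Submodule.span ℝ (s : Set E) := by
    rw [latSpan, ← hs, Submodule.span_span_of_tower] at hy
    exact hy
  rw [Submodule.mem_span_finset] at hy'
  obtain ⟨f, -, hsum⟩ := hy'
  have hz : (∑ v ∈ s, (round (f v) : ℤ) • v) ∈ Q := by
    refine Submodule.sum_mem _ fun v hv => Submodule.smul_mem _ _ ?_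
    rw [← hs]; exact Submodule.subset_span hv
  refine (infDist_le_dist_of_mem hz).trans ?_
  rw [dist_eq_norm, ← hsum, ← Finset.sum_sub_distrib]
  refine (norm_sum_le _ _).trans (Finset.sum_le_sum fun v hv => ?_)
  have : f v • v - (round (f v) : ℤ) • v = (f v - round (f v)) • v := by
    rw [sub_smul, Int.cast_smul_eq_zsmul]
  rw [this, norm_smul]
  have h1 : |f v - round (f v)| ≤ 1 := (abs_sub_round (f v)).trans (by norm_num)
  calc ‖f v - (round (f v) : ℝ)‖ * ‖v‖ ≤ 1 * ‖v‖ :=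
        mul_le_mul_of_nonneg_right h1 (norm_nonneg v)
    _ = ‖v‖ := one_mul _

lemma infDist_le_covRad (Q : Submodule ℤ E) (hQ : Q.FG) {y : E} (hy : y ∈ latSpan Q) :
    infDist y (Q : Set E) ≤ covRad Q := by
  obtain ⟨C, hC⟩ := exists_covRad_bound Q hQ
  have hbdd : BddAbove (Set.range fun x : latSpan Q => infDist (x : E) (Q : Set E)) :=
    ⟨C, by rintro _ ⟨x, rfl⟩; exact hC x x.2⟩
  exact le_ciSup hbdd (⟨y, hy⟩ : latSpan Q)

lemma projPerp_eq (L' : Submodule ℤ E) (z : E) :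
    projPerp L' z = z - (Submodule.orthogonalProjection (latSpan L') z : E) := by
  have h := Submodule.starProjection_add_starProjection_orthogonal (K := latSpan L') z
  have h2 : projPerp L' z = (Submodule.orthogonalProjection (latSpan L')ᗮ z : E) := rfl
  rw [h2, eq_sub_iff_add_eq, add_comm]
  exact h

lemma main_ind (k : ℕ) (L : Submodule ℤ E) (hLfg : L.FG)
    (Lc : ℕ → Submodule ℤ E) (h0 : Lc 0 = ⊥)
    (hchain : ∀ i < k, Lc i ≤ Lc (i + 1))
    (hle : ∀ i ≤ k, Lc i ≤ L) :
    ∀ j ≤ k, ∀ x ∈ latSpan (Lc j),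
      infDist x ((Lc j : Set E)) ^ 2 ≤
        ∑ i ∈ Finset.range j, covRad (quotLat (Lc (i+1)) (Lc i)) ^ 2 := by
  intro j
  induction j with
  | zero =>
    intro _ x hx
    rw [h0] at hx ⊢
    have hbot : latSpan (⊥ : Submodule ℤ E) = ⊥ := by simp [latSpan]
    rw [hbot, Submodule.mem_bot] at hx
    subst hx
    have h1 : infDist (0:E) ((⊥ : Submodule ℤ E) : Set E) = 0 :=
      infDist_zero_of_mem (Submodule.zero_mem _)
    simp [h1]
  | succ j ih =>
    intro hj x hx
    have hjk : j ≤ k := Nat.le_of_succ_le hj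
    have hjk' : j < k := hj
    set V : Submodule ℝ E := latSpan (Lc j) with hV
    set Q : Submodule ℤ E := quotLat (Lc (j+1)) (Lc j) with hQ
    have hQfg : Q.FG := (fg_of_le_fg (hle (j+1) hj) hLfg).map _
    set g : E →ₗ[ℝ] E := Vᗮ.subtype.comp (Submodule.orthogonalProjection Vᗮ).toLinearMap with hg
    have hgp : ∀ z : E, projPerp (Lc j) z = g z := fun z => rfl
    have hr : projPerp (Lc j) x ∈ latSpan Q := by
      rw [hgp]
      have h1 : g x ∈ Submodule.map g (Submodule.span ℝ ((Lc (j+1)) : Set E)) :=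
        Submodule.mem_map_of_mem hx
      rw [Submodule.map_span] at h1
      refine Submodule.span_mono ?_ h1
      rintro _ ⟨u, hu, rfl⟩
      exact Submodule.mem_map_of_mem hu
    have hB : infDist (projPerp (Lc j) x) (Q : Set E) ≤ covRad Q :=
      infDist_le_covRad Q hQfg hr
    set B := covRad Q with hBdef
    have hB0 : 0 ≤ B := covRad_nonneg Q
    set S := ∑ i ∈ Finset.range j, covRad (quotLat (Lc (i+1)) (Lc i)) ^ 2 with hSdef
    have hS0 : 0 ≤ S := Finset.sum_nonneg fun i _ => sq_nonneg _
    rw [Finset.sum_range_succ]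
    have hmain : ∀ ε : ℝ, 0 < ε → infDist x ((Lc (j+1) : Set E)) ^ 2 ≤ S + B ^ 2 + ε := by
      intro ε hε
      set D : ℝ := 2 * Real.sqrt S + 2 * B + 3 with hD
      have hD0 : 0 < D := by
        have := Real.sqrt_nonneg S
        linarith
      set δ := min 1 (ε / D) with hδ
      have hδ0 : 0 < δ := lt_min one_pos (div_pos hε hD0)
      have hδ1 : δ ≤ 1 := min_le_left _ _
      have hδD : δ * D ≤ ε := by
        rw [← le_div_iff₀ hD0]
        exact min_le_right _ _
      have hQne : (Q : Set E).Nonempty := ⟨0, Q.zero_mem⟩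
      have h1 : infDist (projPerp (Lc j) x) (Q : Set E) < B + δ :=
        lt_of_le_of_lt hB (by linarith)
      obtain ⟨q, hqQ, hq⟩ := (infDist_lt_iff hQne).mp h1
      have hqQ' : q ∈ Q := hqQ
      obtain ⟨v, hv, rfl⟩ := Submodule.mem_map.mp hqQ'
      set y := x - v with hy
      set p : E := (Submodule.orthogonalProjection V y : E) with hp
      have hpV : p ∈ V := SetLike.coe_mem _
      have hA2 := ih hjk p hpV
      set A := infDist p ((Lc j : Set E)) with hAdef
      have hA0 : 0 ≤ A := infDist_nonneg
      have hAS : A ≤ Real.sqrt S := by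
        rw [show A = Real.sqrt (A^2) from (Real.sqrt_sq hA0).symm]
        exact Real.sqrt_le_sqrt hA2
      have hLcne : ((Lc j : Set E)).Nonempty := ⟨0, (Lc j).zero_mem⟩
      obtain ⟨w, hw, hwd⟩ := (infDist_lt_iff hLcne).mp (show A < A + δ by linarith)
      have hmem : v + w ∈ Lc (j+1) := (Lc (j+1)).add_mem hv (hchain j hjk' hw)
      have hd : infDist x ((Lc (j+1) : Set E)) ≤ dist x (v + w) := infDist_le_dist_of_mem hmem
      have hwV : w ∈ V := Submodule.subset_span hw
      have hsplit : x - (v + w) = (p - w) + (y - p) := by rw [hy]; abel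
      have hperp : y - p ∈ Vᗮ := Submodule.sub_starProjection_mem_orthogonal (K := V) y
      have hinV : p - w ∈ V := V.sub_mem hpV hwV
      have hinner : (inner ℝ (p - w) (y - p) : ℝ) = 0 :=
        Submodule.inner_right_of_mem_orthogonal hinV hperp
      have hpyth : dist x (v + w) ^ 2 = ‖p - w‖ ^ 2 + ‖y - p‖ ^ 2 := by
        rw [dist_eq_norm, hsplit, norm_add_sq_real, hinner]; ring
      have hyp : y - p = projPerp (Lc j) x - projPerp (Lc j) v := by
        rw [projPerp_eq, projPerp_eq, hy, hp]
        have hms : (Submodule.orthogonalProjection V (x - v) : E)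
            = (Submodule.orthogonalProjection V x : E) - (Submodule.orthogonalProjection V v : E) := by
          rw [map_sub]; rfl
        rw [hms]; abel
      have hny : ‖y - p‖ < B + δ := by
        rw [hyp, ← dist_eq_norm]; exact hq
      have hnp : ‖p - w‖ < A + δ := by rw [← dist_eq_norm]; exact hwd
      have key : infDist x ((Lc (j+1) : Set E)) ^ 2 ≤ (A + δ)^2 + (B + δ)^2 := by
        calc infDist x ((Lc (j+1) : Set E)) ^ 2 ≤ dist x (v + w) ^ 2 :=
              pow_le_pow_left₀ infDist_nonneg hd 2
          _ = ‖p - w‖ ^ 2 + ‖y - p‖ ^ 2 := hpyth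
          _ ≤ (A + δ)^2 + (B + δ)^2 := by
              have h1 : ‖p - w‖^2 ≤ (A+δ)^2 := pow_le_pow_left₀ (norm_nonneg _) hnp.le 2
              have h2 : ‖y - p‖^2 ≤ (B+δ)^2 := pow_le_pow_left₀ (norm_nonneg _) hny.le 2
              linarith
      have hfinal : (A + δ)^2 + (B + δ)^2 ≤ S + B^2 + ε := by
        have hs0 : 0 ≤ Real.sqrt S := Real.sqrt_nonneg S
        nlinarith [hA2, hδ1, hδD, hAS, hδ0.le, hA0, hB0, hs0]
      linarith
    rw [← hSdef, ← hBdef]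
    by_contra hcon
    push_neg at hcon
    have := hmain ((infDist x ((Lc (j+1) : Set E)) ^ 2 - (S + B^2)) / 2) (by linarith)
    linarith

/-- Let {0} = Λ₀ ⊂ Λ₁ ⊂ ⋯ ⊂ Λ_k = Λ be a filtration of a lattice Λ
by pure sublattices, and let Q_i = Λ_i/Λ_{i−1} be the quotient lattices (images
under the orthogonal projections). Then μ(Λ)² ≤ Σ_{i=1}^k μ(Q_i)². -/
theorem covRad_sq_le_sum_filtration
    {E : Type*} [NormedAddCommGroup E] [InnerProductSpace ℝ E] [FiniteDimensional ℝ E]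
    (n k : ℕ) (L : Submodule ℤ E) (hL : IsLatticeOfRank L n)
    (Lc : ℕ → Submodule ℤ E)
    (h0 : Lc 0 = ⊥) (hk : Lc k = L)
    (hchain : ∀ i < k, Lc i < Lc (i + 1))
    (hpure : ∀ i ≤ k, IsPureIn (Lc i) L) :
    covRad L ^ 2 ≤ ∑ i ∈ Finset.range k, covRad (quotLat (Lc (i + 1)) (Lc i)) ^ 2 := by
  have hLfg : L.FG := by
    obtain ⟨b, hb, rfl⟩ := hL
    exact Submodule.fg_span (Set.finite_range b)
  have key := main_ind k L hLfg Lc h0 (fun i hi => (hchain i hi).le)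
    (fun i hi => (hpure i hi).1) k le_rfl
  rw [hk] at key
  set S := ∑ i ∈ Finset.range k, covRad (quotLat (Lc (i + 1)) (Lc i)) ^ 2 with hS
  have hS0 : 0 ≤ S := Finset.sum_nonneg fun i _ => sq_nonneg _
  have h1 : covRad L ≤ Real.sqrt S := by
    refine Real.iSup_le (fun x => ?_) (Real.sqrt_nonneg S)
    have h2 := key x x.2
    have h3 : infDist (x : E) (L : Set E) = Real.sqrt (infDist (x : E) (L : Set E) ^ 2) :=
      (Real.sqrt_sq infDist_nonneg).symm
    rw [h3]
    exact Real.sqrt_le_sqrt h2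
  calc covRad L ^ 2 ≤ Real.sqrt S ^ 2 := pow_le_pow_left₀ (covRad_nonneg L) h1 2
    _ = S := Real.sq_sqrt hS0

end
end

section
/- Let Λ be a lattice of rank n and let γ ≥ 1. Suppose there exists a complete filtration {0} = Λ₀ ⊂ Λ₁ ⊂ ⋯ ⊂ Λ_n = Λ by pure sublattices with rk(Λ_i) = i and covol(Λ_i/Λ_{i−1}) ≤ γ·λ_n(Λ) for all 1 ≤ i ≤ n. Then for every target t ∈ span(Λ) there exists a lattice vector c ∈ Λ with ‖c − t‖ ≤ (√n·γ/2)·λ_n(Λ). -/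
open scoped RealInnerProductSpace
open Metric

noncomputable section

variable {E : Type*} [NormedAddCommGroup E] [InnerProductSpace ℝ E] [FiniteDimensional ℝ E]

/-- The `i`-th successive minimum of a set `S`: the infimum of `r > 0` such
that `S` contains `i` linearly independent vectors of norm at most `r`. -/
def succMin (S : Set E) (i : ℕ) : ℝ :=
  sInf {r : ℝ | 0 < r ∧ ∃ v : Fin i → E,
    (∀ j, v j ∈ S) ∧ LinearIndependent ℝ v ∧ ∀ j, ‖v j‖ ≤ r}

/-- `x` belongs to the dual lattice of `L`. -/
def MemDual (L : Submodule ℤ E) (x : E) : Prop :=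
  ∀ v ∈ L, ∃ m : ℤ, ⟪x, v⟫ = (m : ℝ)

/-- The dual lattice of `L`, as a set. -/
def dualSet (L : Submodule ℤ E) : Set E := {x | MemDual L x}

/-- The covolume of the lattice generated by `b`, as the square root of the
Gram determinant of `b`. -/
def gramVol {k : ℕ} (b : Fin k → E) : ℝ :=
  Real.sqrt (Matrix.det (Matrix.of fun i j => ⟪b i, b j⟫))

-- AUX
lemma zsmul_one_injective : Function.Injective fun r : ℤ => r • (1 : ℝ) := by
  intro a b h
  simpa using h

lemma IsLatticeOfRank.zbasis {L : Submodule ℤ E} {k : ℕ} (h : IsLatticeOfRank L k) :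
    Nonempty (Module.Basis (Fin k) ℤ L) := by
  obtain ⟨b, hli, rfl⟩ := h
  exact ⟨Module.Basis.span (hli.restrict_scalars zsmul_one_injective)⟩

lemma projPerp_apply (L' : Submodule ℤ E) (x : E) :
    projPerp L' x = (Submodule.orthogonalProjection (latSpan L')ᗮ x : E) := rfl

lemma projPerp_mem (L' : Submodule ℤ E) (x : E) : projPerp L' x ∈ (latSpan L')ᗮ := by
  rw [projPerp_apply]; exact SetLike.coe_mem _

lemma projPerp_eq_zero_of_mem {L' : Submodule ℤ E} {x : E} (hx : x ∈ L') :
    projPerp L' x = 0 := by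
  have hx' : x ∈ latSpan L' := Submodule.subset_span hx
  rw [projPerp_apply,
    Submodule.orthogonalProjectionOnto_apply_of_mem_orthogonal
      ((latSpan L').le_orthogonal_orthogonal hx')]
  rfl

lemma sub_projPerp_mem (L' : Submodule ℤ E) (x : E) : x - projPerp L' x ∈ latSpan L' := by
  have h : (Submodule.orthogonalProjection (latSpan L') x : E) + (Submodule.orthogonalProjection (latSpan L')ᗮ x : E) = x :=
    (latSpan L').starProjection_add_starProjection_orthogonal x
  rw [projPerp_apply]
  rw [sub_eq_of_eq_add h.symm]
  exact SetLike.coe_mem _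

lemma exists_generator {L' L'' : Submodule ℤ E} {i : ℕ}
    (h' : IsLatticeOfRank L' i) (h'' : IsLatticeOfRank L'' (i + 1))
    (hle : L' ≤ L'')
    (hpure : ∀ v ∈ L'', ∀ m : ℤ, m ≠ 0 → m • v ∈ L' → v ∈ L') :
    ∃ g : E, quotLat L'' L' = Submodule.span ℤ {g} := by
  obtain ⟨bM0⟩ := h''.zbasis
  obtain ⟨bL'⟩ := h'.zbasis
  set N : Submodule ℤ L'' := L'.comap L''.subtype with hN
  obtain ⟨m, snf⟩ := Submodule.smithNormalForm bM0 N
  obtain ⟨bM, bN, f, a, hsnf⟩ := snf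
  -- m = i
  have e : N ≃ₗ[ℤ] L' := Submodule.comapSubtypeEquivOfLe hle
  have hmi : i = m := by
    have := (bN.indexEquiv (bL'.map e.symm))
    simpa using (Fintype.card_congr this).symm
  subst hmi
  -- the basis vectors indexed by range f lie in L'
  have hmemL' : ∀ j : Fin i, ((bM (f j) : E)) ∈ L' := by
    intro j
    have ha : a j ≠ 0 := by
      intro h0
      have : (bN j : L'') = 0 := by rw [hsnf j, h0, zero_smul]
      exact bN.ne_zero j (Subtype.coe_injective this)
    have hmem : ((bN j : L'') : E) ∈ L' := (bN j).2
    rw [hsnf j] at hmem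
    have : a j • ((bM (f j) : E)) ∈ L' := by
      simpa using hmem
    exact hpure _ (bM (f j)).2 (a j) ha this
  -- there is an index outside the range of f
  have hnsurj : ∃ k : Fin (i + 1), ∀ j, f j ≠ k := by
    by_contra hcon
    push_neg at hcon
    have hs : Function.Surjective f := fun k => hcon k
    have := Fintype.card_le_of_surjective f hs
    simp at this
  obtain ⟨k, hk⟩ := hnsurj
  -- every other index is in the range of f
  have hcover : ∀ j : Fin (i + 1), j ≠ k → ∃ j', f j' = j := by
    intro j hj
    by_contra hjr
    push_neg at hjr
    have hkim : k ∉ Finset.univ.image f := by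
      simp only [Finset.mem_image]
      rintro ⟨x, -, hx⟩
      exact hk x hx
    have hjim : j ∉ Finset.univ.image f := by
      simp only [Finset.mem_image]
      rintro ⟨x, -, hx⟩
      exact hjr x hx
    have hcard : (insert k (Finset.univ.image f)).card = i + 1 := by
      rw [Finset.card_insert_of_notMem hkim,
        Finset.card_image_of_injective _ f.injective]
      simp
    have huniv : insert k (Finset.univ.image f) = Finset.univ :=
      Finset.eq_univ_of_card _ (by simpa using hcard)
    have : j ∈ insert k (Finset.univ.image f) := by rw [huniv]; exact Finset.mem_univ j
    rcases Finset.mem_insert.mp this with h | h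
    · exact hj h
    · exact hjim h
  -- L'' as a span
  have hspan : L'' = Submodule.span ℤ (Set.range fun j => ((bM j : E))) := by
    conv_lhs => rw [← Submodule.map_subtype_top L'']
    rw [← bM.span_eq, Submodule.map_span, ← Set.range_comp]
    rfl
  refine ⟨projPerp L' (bM k : E), ?_⟩
  rw [quotLat]
  conv_lhs => rw [hspan]
  rw [Submodule.map_span, ← Set.range_comp]
  apply le_antisymm
  · rw [Submodule.span_le]
    rintro x ⟨j, rfl⟩
    by_cases hjk : j = k
    · subst hjk
      exact Submodule.mem_span_singleton_self _
    · obtain ⟨j', hj'⟩ := hcover j hjk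
      have : ((bM j : E)) ∈ L' := hj' ▸ hmemL' j'
      simp only [Function.comp_apply, projPerp_eq_zero_of_mem this]
      exact Submodule.zero_mem _
  · rw [Submodule.span_le, Set.singleton_subset_iff]
    exact Submodule.subset_span ⟨k, rfl⟩

lemma key_induction (n : ℕ) (L : Submodule ℤ E) (Lc : ℕ → Submodule ℤ E) (B : ℝ)
    (h0 : Lc 0 = ⊥)
    (hchain : ∀ i < n, Lc i < Lc (i + 1))
    (hrk : ∀ i ≤ n, IsLatticeOfRank (Lc i) i)
    (hpure : ∀ i ≤ n, IsPureIn (Lc i) L)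
    (hbound : ∀ i < n, ∀ g : E,
      quotLat (Lc (i + 1)) (Lc i) = Submodule.span ℤ {g} → ‖g‖ ≤ B) :
    ∀ i ≤ n, ∀ t ∈ latSpan (Lc i), ∃ c ∈ Lc i, ‖c - t‖ ^ 2 ≤ i * B ^ 2 / 4 := by
  intro i
  induction i with
  | zero =>
    intro _ t ht
    refine ⟨0, Submodule.zero_mem _, ?_⟩
    have ht0 : t = 0 := by
      rw [h0] at ht
      simpa [latSpan] using ht
    simp [ht0]
  | succ i ih =>
    intro hin t ht
    have hin' : i < n := hin
    have hle : Lc i ≤ Lc (i + 1) := (hchain i hin').le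
    obtain ⟨g, hg⟩ := exists_generator (hrk i hin'.le) (hrk (i + 1) hin) hle
      (fun v hv m hm hmv => (hpure i hin'.le).2 v ((hpure (i + 1) hin).1 hv) m hm hmv)
    have hgB : ‖g‖ ≤ B := hbound i hin' g hg
    have hB2 : (0 : ℝ) ≤ B := (norm_nonneg g).trans hgB
    have hgmem : g ∈ quotLat (Lc (i + 1)) (Lc i) := by
      rw [hg]; exact Submodule.mem_span_singleton_self g
    obtain ⟨w, hw, hwg⟩ := hgmem
    -- the real-linear incarnation of the projection
    set Pr : E →ₗ[ℝ] E :=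
      ((latSpan (Lc i))ᗮ.subtype.comp
        (Submodule.orthogonalProjection (latSpan (Lc i))ᗮ).toLinearMap) with hPr
    have hPrP : ∀ x : E, Pr x = projPerp (Lc i) x := fun _ => rfl
    have hPt : Pr t ∈ Submodule.span ℝ {g} := by
      have h1 : Pr t ∈ Submodule.map Pr (latSpan (Lc (i + 1))) :=
        Submodule.mem_map_of_mem ht
      rw [latSpan, Submodule.map_span] at h1
      have himg : Pr '' (Lc (i + 1) : Set E)
          = ((Submodule.span ℤ {g} : Submodule ℤ E) : Set E) := by
        rw [← hg, quotLat]
        ext x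
        simp [hPrP, Submodule.mem_map]
      rw [himg, Submodule.span_span_of_tower] at h1
      exact h1
    obtain ⟨s, hs⟩ := Submodule.mem_span_singleton.mp hPt
    set c₁ : E := (round s) • w with hc₁def
    have hc₁ : c₁ ∈ Lc (i + 1) := Submodule.smul_mem _ _ hw
    have hPc₁ : projPerp (Lc i) c₁ = (round s : ℝ) • g := by
      rw [hc₁def, map_zsmul, hwg, ← Int.cast_smul_eq_zsmul ℝ]
    have hdiff : projPerp (Lc i) t - projPerp (Lc i) c₁ = (s - (round s : ℝ)) • g := by
      rw [hPc₁, ← hPrP, ← hs, sub_smul]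
    have hnv : ‖projPerp (Lc i) t - projPerp (Lc i) c₁‖ ≤ B / 2 := by
      rw [hdiff, norm_smul]
      have h1 : ‖s - (round s : ℝ)‖ ≤ 1 / 2 := by
        rw [Real.norm_eq_abs]; exact abs_sub_round s
      calc ‖s - (round s : ℝ)‖ * ‖g‖ ≤ (1 / 2) * B :=
            mul_le_mul h1 hgB (norm_nonneg g) (by norm_num)
        _ = B / 2 := by ring
    set r : E := (t - c₁) - projPerp (Lc i) (t - c₁) with hrdef
    have hr : r ∈ latSpan (Lc i) := sub_projPerp_mem _ _
    obtain ⟨c₂, hc₂, hc₂n⟩ := ih hin'.le r hr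
    refine ⟨c₁ + c₂, Submodule.add_mem _ hc₁ (hle hc₂), ?_⟩
    have hdecomp : c₁ + c₂ - t = (c₂ - r) - projPerp (Lc i) (t - c₁) := by
      rw [hrdef]; abel
    have hu : c₂ - r ∈ latSpan (Lc i) :=
      Submodule.sub_mem _ (Submodule.subset_span hc₂) hr
    have hvmem : projPerp (Lc i) (t - c₁) ∈ (latSpan (Lc i))ᗮ := projPerp_mem _ _
    have hinner : ⟪c₂ - r, projPerp (Lc i) (t - c₁)⟫ = 0 :=
      Submodule.inner_right_of_mem_orthogonal hu hvmem
    have hnv2 : ‖projPerp (Lc i) (t - c₁)‖ ^ 2 ≤ B ^ 2 / 4 := by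
      have hmap : projPerp (Lc i) (t - c₁) = projPerp (Lc i) t - projPerp (Lc i) c₁ :=
        map_sub _ _ _
      rw [hmap]
      calc ‖projPerp (Lc i) t - projPerp (Lc i) c₁‖ ^ 2 ≤ (B / 2) ^ 2 :=
            pow_le_pow_left₀ (norm_nonneg _) hnv 2
        _ = B ^ 2 / 4 := by ring
    rw [hdecomp, norm_sub_sq_real, hinner]
    push_cast
    nlinarith [norm_nonneg (c₂ - r), norm_nonneg (projPerp (Lc i) (t - c₁))]

/-- Let Λ be a lattice of rank n and γ ≥ 1. Suppose there is a
complete filtration {0} = Λ₀ ⊂ Λ₁ ⊂ ⋯ ⊂ Λ_n = Λ by pure sublattices with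
rk(Λ_i) = i and covol(Λ_i/Λ_{i−1}) ≤ γ·λ_n(Λ) (the rank-one quotient lattices
being generated by a vector of norm at most γ·λ_n(Λ)). Then every t ∈ span(Λ)
admits c ∈ Λ with ‖c − t‖ ≤ (√n·γ/2)·λ_n(Λ). -/
theorem close_vector_of_good_filtration
    {E : Type*} [NormedAddCommGroup E] [InnerProductSpace ℝ E] [FiniteDimensional ℝ E]
    (n : ℕ) (L : Submodule ℤ E) (hL : IsLatticeOfRank L n) (γ : ℝ) (hγ : 1 ≤ γ)
    (Lc : ℕ → Submodule ℤ E)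
    (h0 : Lc 0 = ⊥) (hn : Lc n = L)
    (hchain : ∀ i < n, Lc i < Lc (i + 1))
    (hrk : ∀ i ≤ n, IsLatticeOfRank (Lc i) i)
    (hpure : ∀ i ≤ n, IsPureIn (Lc i) L)
    (hcovol : ∀ i < n, ∀ g : E,
      quotLat (Lc (i + 1)) (Lc i) = Submodule.span ℤ {g} →
      ‖g‖ ≤ γ * succMin (L : Set E) n) :
    ∀ t ∈ latSpan L, ∃ c ∈ L,
      ‖c - t‖ ≤ Real.sqrt n * γ / 2 * succMin (L : Set E) n := by
  intro t ht
  set lam := succMin (L : Set E) n with hlam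
  have hlam0 : 0 ≤ lam := Real.sInf_nonneg (fun x hx => hx.1.le)
  have ht' : t ∈ latSpan (Lc n) := by rw [hn]; exact ht
  obtain ⟨c, hc, hcn⟩ := key_induction n L Lc (γ * lam) h0 hchain hrk hpure hcovol n le_rfl t ht'
  refine ⟨c, by rwa [hn] at hc, ?_⟩
  have hrhs : 0 ≤ Real.sqrt n * γ / 2 * lam := by
    have := Real.sqrt_nonneg (n : ℝ)
    positivity
  have hsq : ‖c - t‖ ^ 2 ≤ (Real.sqrt n * γ / 2 * lam) ^ 2 := by
    have h2 : (Real.sqrt n) ^ 2 = (n : ℝ) := Real.sq_sqrt (Nat.cast_nonneg n)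
    calc ‖c - t‖ ^ 2 ≤ n * (γ * lam) ^ 2 / 4 := hcn
      _ = (Real.sqrt n * γ / 2 * lam) ^ 2 := by
          have hx : (Real.sqrt n * γ / 2 * lam) ^ 2 = (Real.sqrt n) ^ 2 * (γ * lam) ^ 2 / 4 := by
            ring
          rw [hx, h2]
  calc ‖c - t‖ = Real.sqrt (‖c - t‖ ^ 2) := (Real.sqrt_sq (norm_nonneg _)).symm
    _ ≤ Real.sqrt ((Real.sqrt n * γ / 2 * lam) ^ 2) := Real.sqrt_le_sqrt hsq
    _ = Real.sqrt n * γ / 2 * lam := Real.sqrt_sq hrhs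


end
end
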